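/- Consider the constraint system over natural numbers: a₂ = p₅ + p₇ + p₈, p₆ = p₀ + p₂ + p₃ + p₅ + p₇, together with the constraint p₆ = p₈. Then for natural numbers a₂, p₀, p₂, p₃: there exist p₅, p₆, p₇, p₈ ∈ ℕ satisfying all three equations if and only if a₂ ≥ p₀ + p₂ + p₃ and a₂ − (p₀ + p₂ + p₃) is even. -/
import Mathlib

/-- Running example `H₁ ≜ (p₆ = p₈)`: the integer shadow of `E ∧ H₁` after
eliminating `p₅, p₆, p₇, p₈` is exactly
`{(a₂,p₀,p₂,p₃) | p₀+p₂+p₃ ≤ a₂ ∧ a₂ ≡ p₀+p₂+p₃ (mod 2)}`. -/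
theorem stmt_7 (a₂ p₀ p₂ p₃ : ℕ) :
    (∃ p₅ p₆ p₇ p₈ : ℕ,
        a₂ = p₅ + p₇ + p₈ ∧ p₆ = p₀ + p₂ + p₃ + p₅ + p₇ ∧ p₆ = p₈)
      ↔ (p₀ + p₂ + p₃ ≤ a₂ ∧ Even (a₂ - (p₀ + p₂ + p₃))) := by
  constructor
  · rintro ⟨p₅, p₆, p₇, p₈, h1, h2, h3⟩
    refine ⟨by omega, ⟨p₅ + p₇, by omega⟩⟩
  · rintro ⟨hle, k, hk⟩
    exact ⟨k, p₀ + p₂ + p₃ + k, 0, p₀ + p₂ + p₃ + k, by omega, by omega, rfl⟩
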